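/- If D[i,j] = 0 in the DTW table (with i ≥ 1), then every cell on any cost-realizing path from row 0 to (i,j) satisfies P[i'] = T[j']; in particular, each zero-valued cell with i ≥ 1 lies in a homogeneous block, and any maximal diagonal chain of homogeneous blocks containing zero values reaches the first row of D. -/

import Mathlib

open scoped ENNReal

def isStep (p q : ℕ × ℕ) : Prop :=
  (q.1 = p.1 + 1 ∧ q.2 = p.2) ∨ (q.1 = p.1 ∧ q.2 = p.2 + 1) ∨
    (q.1 = p.1 + 1 ∧ q.2 = p.2 + 1)

/-- A monotone staircase path in the DTW table starting at some cell `(1, j₀)` of the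
first row and ending at `(i, j)`. -/
def IsTablePath (i j : ℕ) (π : List (ℕ × ℕ)) : Prop :=
  π ≠ [] ∧ (∃ j0, 1 ≤ j0 ∧ π.head? = some (1, j0)) ∧
    π.getLast? = some (i, j) ∧ π.Chain' isStep

/-- with integer letter distances, if `D[i,j] = 0` (`i ≥ 1`), then every
cell of any cost-realizing path to `(i,j)` matches (`P[i'] = T[j']`); in particular
`(i,j)` lies in a homogeneous block (`P[i] = T[j]`), and there is a chain of matching
zero-valued cells (a 0-streak) reaching the first row of `D`. -/
theorem zero_cell_structure {α : Type*} (d : α → α → ℝ≥0∞) (P T : ℕ → α)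
    (hint : ∀ a b, ∃ n : ℕ, d a b = n)
    (hrefl : ∀ a, d a a = 0) (hd1 : ∀ a b, a ≠ b → 1 ≤ d a b)
    (D : ℕ → ℕ → ℝ≥0∞)
    (hD0 : ∀ j, D 0 j = 0) (hDi0 : ∀ i, 1 ≤ i → D i 0 = ⊤)
    (hrec : ∀ i j, 1 ≤ i → 1 ≤ j →
      D i j = min (min (D (i - 1) (j - 1)) (D (i - 1) j)) (D i (j - 1))
        + d (P i) (T j))
    (i j : ℕ) (hi : 1 ≤ i) (hj : 1 ≤ j) (hzero : D i j = 0) :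
    (∀ π, IsTablePath i j π →
        D i j = (π.map (fun p => d (P p.1) (T p.2))).sum →
        ∀ p ∈ π, P p.1 = T p.2) ∧
    P i = T j ∧
    (∃ π, IsTablePath i j π ∧ ∀ p ∈ π, P p.1 = T p.2 ∧ D p.1 p.2 = 0) := by
  -- basic decomposition lemma
  have key : ∀ i j, 1 ≤ i → 1 ≤ j → D i j = 0 →
      P i = T j ∧ (D (i-1) (j-1) = 0 ∨ D (i-1) j = 0 ∨ D i (j-1) = 0) := by
    intro i j hi hj hz
    rw [hrec i j hi hj] at hz
    rw [add_eq_zero] at hz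
    obtain ⟨hmin, hdz⟩ := hz
    constructor
    · by_contra hne
      have := hd1 _ _ hne
      rw [hdz] at this
      simp at this
    · have hmin' : min (min (D (i-1) (j-1)) (D (i-1) j)) (D i (j-1)) = ⊥ := by
        rw [bot_eq_zero]; exact hmin
      rcases min_eq_bot.mp hmin' with h | h
      · rcases min_eq_bot.mp h with h' | h'
        · exact Or.inl (by rw [← bot_eq_zero]; exact h')
        · exact Or.inr (Or.inl (by rw [← bot_eq_zero]; exact h'))
      · exact Or.inr (Or.inr (by rw [← bot_eq_zero]; exact h))
  refine ⟨?_, (key i j hi hj hzero).1, ?_⟩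
  · intro π hπ hsum p hp
    rw [hzero] at hsum
    have h0 : d (P p.1) (T p.2) = 0 := by
      exact List.sum_eq_zero_iff.mp hsum.symm (d (P p.1) (T p.2))
        (List.mem_map_of_mem hp)
    by_contra hne
    have := hd1 _ _ hne
    rw [h0] at this
    simp at this
  · -- construct the path by strong induction on i + j
    have main : ∀ n i j, i + j ≤ n → 1 ≤ i → 1 ≤ j → D i j = 0 →
        ∃ π, IsTablePath i j π ∧ ∀ p ∈ π, P p.1 = T p.2 ∧ D p.1 p.2 = 0 := by
      intro n
      induction n with
      | zero => intro i j hn hi; omega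
      | succ n ih =>
        intro i j hn hi hj hz
        obtain ⟨hPT, hpred⟩ := key i j hi hj hz
        by_cases hi1 : i = 1
        · subst hi1
          refine ⟨[(1, j)], ⟨by simp, ⟨j, hj, rfl⟩, by simp, List.isChain_singleton _⟩, ?_⟩
          intro p hp
          simp at hp
          subst hp
          exact ⟨hPT, hz⟩
        · have hi2 : 2 ≤ i := by omega
          -- determine a valid predecessor
          have : ∃ i' j', 1 ≤ i' ∧ 1 ≤ j' ∧ i' + j' ≤ n ∧ D i' j' = 0 ∧
              isStep (i', j') (i, j) := by
            rcases hpred with h | h | h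
            · -- diagonal: need j ≥ 2, else D (i-1) 0 = ⊤
              have hj2 : 2 ≤ j := by
                by_contra hc
                have : j = 1 := by omega
                subst this
                simp at h
                rw [hDi0 (i-1) (by omega)] at h
                simp at h
              exact ⟨i-1, j-1, by omega, by omega, by omega, h,
                Or.inr (Or.inr ⟨by omega, by omega⟩)⟩
            · exact ⟨i-1, j, by omega, hj, by omega, h,
                Or.inl ⟨by omega, rfl⟩⟩
            · have hj2 : 2 ≤ j := by
                by_contra hc
                have : j = 1 := by omega
                subst this
                simp at h
                rw [hDi0 i hi] at h
                simp at h
              exact ⟨i, j-1, hi, by omega, by omega, h,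
                Or.inr (Or.inl ⟨rfl, by omega⟩)⟩
          obtain ⟨i', j', hi', hj', hn', hz', hstep⟩ := this
          obtain ⟨π, ⟨hne, hhead, hlast, hchain⟩, hall⟩ := ih i' j' hn' hi' hj' hz'
          refine ⟨π ++ [(i, j)], ⟨by simp, ?_, by simp, ?_⟩, ?_⟩
          · obtain ⟨j0, hj0, hh⟩ := hhead
            exact ⟨j0, hj0, by rw [List.head?_append_of_ne_nil] <;> simpa⟩
          · show List.IsChain _ _; rw [List.isChain_append]
            refine ⟨hchain, List.isChain_singleton _, ?_⟩
            intro x hx y hy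
            simp at hy
            rw [hlast] at hx
            simp at hx
            subst hx
            subst hy
            exact hstep
          · intro p hp
            rcases List.mem_append.mp hp with h | h
            · exact hall p h
            · simp at h
              subst h
              exact ⟨hPT, hz⟩
    exact main (i + j) i j le_rfl hi hj hzero
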